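/- Fix 0 ≤ r ≤ n−1 and let H_{r,n}(q) = ∑_{ℓ=0}^{r} C(n−r−1+ℓ, ℓ) q^ℓ. Then all complex zeros of H_{r,n} lie in the annulus 1/(n−r) ≤ |q| ≤ r/(n−1). -/

import Mathlib

open Finset

private lemma ekIdent (b : ℕ → ℂ) (z : ℂ) (r : ℕ) :
    (z - 1) * ∑ l ∈ Finset.range (r + 1), b l * z ^ l
      = b r * z ^ (r + 1) - b 0
        - ∑ j ∈ Finset.range r, (b (j + 1) - b j) * z ^ (j + 1) := by
  induction r with
  | zero => simp; ring
  | succ r ih =>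
    rw [Finset.sum_range_succ, mul_add, ih, Finset.sum_range_succ]
    ring

private lemma keyEK {r : ℕ} {b : ℕ → ℝ} (hb : ∀ l, l ≤ r → 0 < b l)
    (hmono : ∀ k, k < r → b k ≤ b (k + 1)) {z : ℂ}
    (hz : ∑ l ∈ Finset.range (r + 1), (b l : ℂ) * z ^ l = 0) :
    ‖z‖ ≤ 1 := by
  by_contra hgt
  push_neg at hgt
  have hzr : (b r : ℂ) * z ^ (r + 1)
      = b 0 + ∑ j ∈ Finset.range r, ((b (j + 1) : ℂ) - b j) * z ^ (j + 1) := by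
    have h := ekIdent (fun l => (b l : ℂ)) z r
    rw [hz, mul_zero] at h
    linear_combination -h
  set A := ‖z‖ with hA
  have hA1 : (1 : ℝ) ≤ A := hgt.le
  have habs : b r * A ^ (r + 1)
      ≤ b 0 + ∑ j ∈ Finset.range r, (b (j + 1) - b j) * A ^ (j + 1) := by
    have e1 : b r * A ^ (r + 1) = ‖(b r : ℂ) * z ^ (r + 1)‖ := by
      rw [norm_mul, norm_pow, Complex.norm_real, Real.norm_eq_abs, abs_of_pos (hb r le_rfl)]
    rw [e1, hzr]
    refine le_trans (norm_add_le _ _) ?_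
    have e2 : ‖((b 0 : ℝ) : ℂ)‖ = b 0 := by
      rw [Complex.norm_real, Real.norm_eq_abs, abs_of_pos (hb 0 (Nat.zero_le r))]
    rw [e2]
    refine add_le_add le_rfl ?_
    refine le_trans (norm_sum_le _ _) ?_
    apply Finset.sum_le_sum
    intro j hj
    rw [norm_mul, norm_pow]
    have : ‖(b (j+1) : ℂ) - (b j : ℂ)‖ = b (j+1) - b j := by
      rw [← Complex.ofReal_sub, Complex.norm_real, Real.norm_eq_abs,
        abs_of_nonneg (sub_nonneg.2 (hmono j (Finset.mem_range.1 hj)))]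
    rw [this]
  have hstep : b 0 + ∑ j ∈ Finset.range r, (b (j + 1) - b j) * A ^ (j + 1)
      ≤ b r * A ^ r := by
    have tele : b 0 + ∑ j ∈ Finset.range r, (b (j + 1) - b j) = b r := by
      rw [Finset.sum_range_sub]; ring
    calc b 0 + ∑ j ∈ Finset.range r, (b (j + 1) - b j) * A ^ (j + 1)
        ≤ b 0 * A ^ r + ∑ j ∈ Finset.range r, (b (j + 1) - b j) * A ^ r := by
          refine add_le_add ?_ ?_
          · calc b 0 = b 0 * 1 := by ring
              _ ≤ b 0 * A ^ r :=
                mul_le_mul_of_nonneg_left (one_le_pow₀ hA1) (hb 0 (Nat.zero_le r)).le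
          · apply Finset.sum_le_sum
            intro j hj
            have hjr : j + 1 ≤ r := Finset.mem_range.1 hj
            exact mul_le_mul_of_nonneg_left (pow_le_pow_right₀ hA1 hjr)
              (sub_nonneg.2 (hmono j (Finset.mem_range.1 hj)))
      _ = (b 0 + ∑ j ∈ Finset.range r, (b (j + 1) - b j)) * A ^ r := by
          rw [add_mul, Finset.sum_mul]
      _ = b r * A ^ r := by rw [tele]
  have hAr : (0:ℝ) < A ^ r := pow_pos (lt_of_lt_of_le one_pos hA1) r
  have h3 : b r * A ^ (r+1) ≤ b r * A ^ r := le_trans habs hstep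
  have hle : A ^ (r+1) ≤ A ^ r := le_of_mul_le_mul_left h3 (hb r le_rfl)
  rw [pow_succ] at hle
  have h4 : A ≤ 1 := by
    have h5 : A ^ r * A ≤ A ^ r * 1 := by simpa using hle
    exact le_of_mul_le_mul_left h5 hAr
  exact absurd h4 (not_le.2 hgt)

private lemma EKupper {r : ℕ} {a : ℕ → ℝ} {B : ℝ} (hB : 0 < B)
    (ha : ∀ l, l ≤ r → 0 < a l)
    (hmono : ∀ k, k < r → a k ≤ B * a (k + 1)) {z : ℂ}
    (hz : ∑ l ∈ Finset.range (r + 1), (a l : ℂ) * z ^ l = 0) :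
    ‖z‖ ≤ B := by
  have hB0 : (B : ℂ) ≠ 0 := by exact_mod_cast hB.ne'
  have h1 : ‖z / B‖ ≤ 1 := by
    apply keyEK (b := fun l => a l * B ^ l)
    · intro l hl
      exact mul_pos (ha l hl) (pow_pos hB l)
    · intro k hk
      have h2 := mul_le_mul_of_nonneg_right (hmono k hk) (pow_nonneg hB.le k)
      calc a k * B ^ k ≤ B * a (k + 1) * B ^ k := h2
        _ = a (k + 1) * B ^ (k + 1) := by ring
    · rw [← hz]
      apply Finset.sum_congr rfl
      intro l _
      have hBl : ((B : ℂ)) ^ l ≠ 0 := pow_ne_zero l hB0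
      push_cast
      rw [div_pow]
      field_simp
  rw [norm_div, Complex.norm_real, Real.norm_eq_abs, abs_of_pos hB, div_le_one hB] at h1
  exact h1

private lemma natUpper (m r k : ℕ) (hk : k + 1 ≤ r) :
    (m + k).choose k * (m + r) ≤ r * (m + k + 1).choose (k + 1) := by
  have hid : (m + k + 1) * (m + k).choose k = (m + k + 1).choose (k + 1) * (k + 1) :=
    Nat.add_one_mul_choose_eq (m + k) k
  have key : (k + 1) * ((m + k).choose k * (m + r))
      ≤ (k + 1) * (r * (m + k + 1).choose (k + 1)) := by
    calc (k + 1) * ((m + k).choose k * (m + r))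
        = (m + k).choose k * ((m + r) * (k + 1)) := by ring
      _ ≤ (m + k).choose k * (r * (m + k + 1)) := by
          apply Nat.mul_le_mul_left
          nlinarith
      _ = r * ((m + k + 1) * (m + k).choose k) := by ring
      _ = (k + 1) * (r * (m + k + 1).choose (k + 1)) := by rw [hid]; ring
  exact Nat.le_of_mul_le_mul_left key (Nat.succ_pos k)

private lemma natLower (m j : ℕ) :
    (m + j + 1).choose (j + 1) ≤ (m + 1) * (m + j).choose j := by
  have hid : (m + j + 1) * (m + j).choose j = (m + j + 1).choose (j + 1) * (j + 1) :=
    Nat.add_one_mul_choose_eq (m + j) j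
  have key : (j + 1) * (m + j + 1).choose (j + 1)
      ≤ (j + 1) * ((m + 1) * (m + j).choose j) := by
    calc (j + 1) * (m + j + 1).choose (j + 1)
        = (m + j + 1).choose (j + 1) * (j + 1) := by ring
      _ = (m + j + 1) * (m + j).choose j := hid.symm
      _ ≤ ((m + 1) * (j + 1)) * (m + j).choose j := by
          apply Nat.mul_le_mul_right
          nlinarith
      _ = (j + 1) * ((m + 1) * (m + j).choose j) := by ring
  exact Nat.le_of_mul_le_mul_left key (Nat.succ_pos j)

private lemma natLowerR (m j : ℕ) :
    ((m + (j + 1)).choose (j + 1) : ℝ) ≤ ((m + 1 : ℕ) : ℝ) * ((m + j).choose j : ℝ) := by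
  have := natLower m j
  have h2 : (m + (j + 1)) = m + j + 1 := by omega
  rw [h2]
  exact_mod_cast this

private lemma natUpperR (m r k : ℕ) (hk : k + 1 ≤ r) :
    ((m + k).choose k : ℝ) * ((m + r : ℕ) : ℝ)
      ≤ (r : ℝ) * ((m + (k + 1)).choose (k + 1) : ℝ) := by
  have := natUpper m r k hk
  have h2 : (m + (k + 1)) = m + k + 1 := by omega
  rw [h2]
  exact_mod_cast this

theorem stmt16 {n r : ℕ} (h : r < n) (q : ℂ)
    (hq : ∑ l ∈ Finset.range (r + 1), ((n - r - 1 + l).choose l : ℂ) * q ^ l = 0) :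
    1 / ((n : ℝ) - r) ≤ ‖q‖ ∧ ‖q‖ ≤ (r : ℝ) / ((n : ℝ) - 1) := by
  rcases Nat.eq_zero_or_pos r with hr | hr
  · subst hr
    simp at hq
  set m : ℕ := n - r - 1 with hm
  have hn : n = m + r + 1 := by omega
  set a : ℕ → ℝ := fun l => ((m + l).choose l : ℝ) with ha
  have hapos : ∀ l, l ≤ r → 0 < a l := by
    intro l _
    show (0:ℝ) < ((m + l).choose l : ℝ)
    exact_mod_cast Nat.choose_pos (Nat.le_add_left l m)
  have hq' : ∑ l ∈ Finset.range (r + 1), (a l : ℂ) * q ^ l = 0 := by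
    rw [← hq]
    apply Finset.sum_congr rfl
    intro l _
    simp [ha, hm]
  have hn1 : (n : ℝ) - 1 = ((m + r : ℕ) : ℝ) := by
    rw [hn]; push_cast; ring
  have hnr : (n : ℝ) - r = ((m + 1 : ℕ) : ℝ) := by
    rw [hn]; push_cast; ring
  constructor
  · -- lower bound
    have hq0 : q ≠ 0 := by
      intro hq0
      subst hq0
      rw [Finset.sum_eq_single 0 (by intro l _ hl; simp [zero_pow hl]) (by simp)] at hq'
      simp at hq'
      exact (hapos 0 (Nat.zero_le r)).ne' hq'
    have hrev : ∑ j ∈ Finset.range (r + 1), (a (r - j) : ℂ) * (q⁻¹) ^ j = 0 := by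
      have h1 : ∑ j ∈ Finset.range (r + 1), (a (r - j) : ℂ) * q ^ (r - j) = 0 := by
        have h0 := Finset.sum_range_reflect (fun l => (a l : ℂ) * q ^ l) (r + 1)
        simpa [hq'] using h0
      have h2 : ∑ j ∈ Finset.range (r + 1), (a (r - j) : ℂ) * q ^ (r - j)
          = q ^ r * ∑ j ∈ Finset.range (r + 1), (a (r - j) : ℂ) * (q⁻¹) ^ j := by
        rw [Finset.mul_sum]
        apply Finset.sum_congr rfl
        intro j hj
        have hjr : j ≤ r := by
          have := Finset.mem_range.1 hj; omega
        rw [pow_sub₀ q hq0 hjr, inv_pow]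
        ring
      rw [h2] at h1
      exact (mul_eq_zero.1 h1).resolve_left (pow_ne_zero r hq0)
    have hm1 : (0:ℝ) < ((m + 1 : ℕ) : ℝ) := by positivity
    have hupper : ‖q⁻¹‖ ≤ ((m + 1 : ℕ) : ℝ) := by
      apply EKupper (r := r) (a := fun j => a (r - j)) hm1
      · intro l _
        exact hapos (r - l) (by omega)
      · intro k hk
        show a (r - k) ≤ ((m + 1 : ℕ) : ℝ) * a (r - (k + 1))
        have hjj : r - k = (r - (k + 1)) + 1 := by omega
        rw [hjj]
        exact natLowerR m (r - (k + 1))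
      · exact hrev
    rw [norm_inv] at hupper
    rw [hnr, one_div]
    have hq0' : 0 < ‖q‖ := norm_pos_iff.2 hq0
    exact (inv_le_comm₀ hq0' hm1).1 hupper
  · -- upper bound
    rw [hn1]
    have hmr : (0:ℝ) < ((m + r : ℕ) : ℝ) := by
      have h0 : 0 < m + r := by omega
      exact_mod_cast h0
    have hr' : (0:ℝ) < (r:ℝ) := by exact_mod_cast hr
    apply EKupper (B := (r : ℝ) / ((m + r : ℕ) : ℝ)) (by positivity) hapos _ hq'
    intro k hk
    rw [div_mul_eq_mul_div, le_div_iff₀ hmr]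
    show ((m + k).choose k : ℝ) * ((m + r : ℕ) : ℝ)
      ≤ (r : ℝ) * ((m + (k + 1)).choose (k + 1) : ℝ)
    exact natUpperR m r k (by omega)
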